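/- (Hommel-type bound) Let p̂₁,…,p̂ₜ be random variables on a common probability space such that P(p̂ᵢ ≤ u) ≤ u for every i and every u ∈ (0,1). Let p̂₍₁₎ ≤ ⋯ ≤ p̂₍ₜ₎ denote their order statistics, and let 0 = β₀ ≤ β₁ ≤ ⋯ ≤ βₘ ≤ 1 with m ≤ t. Then P(⋃_{i=1}^{m} {p̂₍ᵢ₎ ≤ βᵢ}) ≤ t · Σ_{i=1}^{m} (βᵢ - βᵢ₋₁)/i. -/

import Mathlib

open MeasureTheory Finset
open scoped Classical ENNReal

/-- `orderStat p k` is the `k`-th smallest value (1-indexed) among `p 0, …, p (n-1)`. -/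
noncomputable def orderStat {n : ℕ} (p : Fin n → ℝ) (k : ℕ) : ℝ :=
  if h : k - 1 < n then p (Tuple.sort p ⟨k - 1, h⟩) else 0

lemma tele2 (f : ℕ → ℝ) (k : ℕ) : ∑ i ∈ Finset.Icc 1 k, (f i - f (i-1)) = f k - f 0 := by
  induction k with
  | zero => simp
  | succ n ih =>
    rw [Finset.sum_Icc_succ_top (by omega), ih]
    simp only [Nat.add_sub_cancel]
    ring

lemma abelid2 (a : ℕ → ℝ) (h0 : a 0 = 0) (m : ℕ) :
    ∑ i ∈ Finset.Icc 1 (m+1), (a i - a (i-1))/(i:ℝ) =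
      a (m+1)/(m+1) + ∑ i ∈ Finset.Icc 1 m, a i * (1/(i:ℝ) - 1/((i:ℝ)+1)) := by
  induction m with
  | zero => simp [h0]
  | succ n ih =>
    rw [Finset.sum_Icc_succ_top (a := 1) (by omega), ih,
      Finset.sum_Icc_succ_top (a := 1) (by omega)]
    simp only [Nat.add_sub_cancel]
    push_cast
    have h1 : ((n:ℝ)+1) ≠ 0 := by positivity
    have h2 : ((n:ℝ)+1+1) ≠ 0 := by positivity
    field_simp
    ring

lemma abel_le2 (a b : ℕ → ℝ) (ha0 : a 0 = 0) (hb0 : b 0 = 0) (m : ℕ)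
    (hab : ∀ i, 1 ≤ i → i ≤ m → a i ≤ b i) :
    ∑ i ∈ Finset.Icc 1 m, (a i - a (i-1))/(i:ℝ) ≤
      ∑ i ∈ Finset.Icc 1 m, (b i - b (i-1))/(i:ℝ) := by
  cases m with
  | zero => simp
  | succ n =>
    rw [abelid2 a ha0, abelid2 b hb0]
    apply add_le_add
    · apply div_le_div_of_nonneg_right (hab _ (by omega) le_rfl) (by positivity)
    · apply Finset.sum_le_sum
      intro i hi
      simp only [Finset.mem_Icc] at hi
      apply mul_le_mul_of_nonneg_right (hab _ hi.1 (by omega))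
      have h1 : (0:ℝ) < (i:ℝ) := by exact_mod_cast hi.1
      have : (1:ℝ)/((i:ℝ)+1) ≤ 1/(i:ℝ) := by
        apply one_div_le_one_div_of_le h1 (by linarith)
      linarith

lemma orderStat_le_count2 {n : ℕ} (q : Fin n → ℝ) {k : ℕ} (hk1 : 1 ≤ k) (hkn : k ≤ n) {c : ℝ}
    (h : orderStat q k ≤ c) :
    k ≤ (Finset.univ.filter fun j => q j ≤ c).card := by
  have hlt : k - 1 < n := by omega
  rw [orderStat, dif_pos hlt] at h
  have hcard : (Finset.univ : Finset (Fin k)).card = k := by simp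
  rw [← hcard]
  apply Finset.card_le_card_of_injOn (fun j : Fin k => Tuple.sort q (Fin.castLE hkn j))
  · intro j _
    simp only [Finset.mem_coe, Finset.mem_filter, Finset.mem_univ, true_and]
    calc q (Tuple.sort q (Fin.castLE hkn j)) ≤ q (Tuple.sort q ⟨k-1, hlt⟩) := by
          apply Tuple.monotone_sort q
          simp [Fin.le_def]
          omega
      _ ≤ c := h
  · intro x _ y _ hxy
    have := (Tuple.sort q).injective hxy
    exact Fin.castLE_injective hkn this


/-- Hommel-type bound (Lemma 3.2(i)): if each `p i` is a marginal p-value, then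
`P(⋃_{i=1}^m {p_(i) ≤ β i}) ≤ t · ∑_{i=1}^m (β i - β (i-1))/i`. -/
theorem stmt4 {Ω : Type*} [MeasurableSpace Ω] (μ : Measure Ω) [IsProbabilityMeasure μ]
    {t m : ℕ} (hm : m ≤ t) (p : Fin t → Ω → ℝ) (hmeas : ∀ i, Measurable (p i))
    (hval : ∀ i, ∀ᵐ ω ∂μ, p i ω ∈ Set.Icc (0 : ℝ) 1)
    (hp : ∀ i, ∀ u ∈ Set.Ioo (0 : ℝ) 1, μ {ω | p i ω ≤ u} ≤ ENNReal.ofReal u)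
    (β : ℕ → ℝ) (hβ0 : β 0 = 0) (hβmono : ∀ i j, i ≤ j → j ≤ m → β i ≤ β j)
    (hβ1 : β m ≤ 1) :
    (μ {ω | ∃ i ∈ Finset.Icc 1 m, orderStat (fun j => p j ω) i ≤ β i}).toReal ≤
      t * ∑ i ∈ Finset.Icc 1 m, (β i - β (i - 1)) / i := by
  -- measurable level sets
  have msets : ∀ (j : Fin t) (c : ℝ), MeasurableSet {ω | p j ω ≤ c} := by
    intro j c
    exact measurableSet_le (hmeas j) measurable_const
  -- p-values are a.s. positive
  have key0 : ∀ j : Fin t, μ {ω | p j ω ≤ (0:ℝ)} = 0 := by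
    intro j
    refine le_antisymm ?_ zero_le
    refine ENNReal.le_of_forall_pos_le_add ?_
    intro ε hε _
    set u : ℝ := min ((ε:ℝ)/2) (1/2) with hu
    have hu0 : 0 < u := by
      apply lt_min _ (by norm_num)
      have : (0:ℝ) < (ε:ℝ) := by exact_mod_cast hε
      linarith
    have hu1 : u < 1 := lt_of_le_of_lt (min_le_right _ _) (by norm_num)
    calc μ {ω | p j ω ≤ (0:ℝ)} ≤ μ {ω | p j ω ≤ u} := by
          apply measure_mono; intro ω hω; exact le_trans hω hu0.le
      _ ≤ ENNReal.ofReal u := hp j u ⟨hu0, hu1⟩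
      _ ≤ (ε : ℝ≥0∞) := by
          rw [← ENNReal.ofReal_coe_nnreal]
          apply ENNReal.ofReal_le_ofReal
          have : (0:ℝ) < (ε:ℝ) := by exact_mod_cast hε
          calc u ≤ (ε:ℝ)/2 := min_le_left _ _
            _ ≤ (ε:ℝ) := by linarith
      _ = 0 + ε := by rw [zero_add]
  have keyC : ∀ (j : Fin t) (c : ℝ), 0 ≤ c → c ≤ 1 → (μ {ω | p j ω ≤ c}).toReal ≤ c := by
    intro j c hc0 hc1
    rcases eq_or_lt_of_le hc0 with h0 | h0
    · rw [← h0, key0 j]; simp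
    rcases eq_or_lt_of_le hc1 with h1 | h1
    · calc (μ {ω | p j ω ≤ c}).toReal ≤ (μ Set.univ).toReal := by
            apply ENNReal.toReal_mono (measure_ne_top _ _) (measure_mono (Set.subset_univ _))
        _ = 1 := by simp
        _ = c := h1.symm
    · exact ENNReal.toReal_le_of_le_ofReal hc0 (hp j c ⟨h0, h1⟩)
  -- counting functions
  set S : ℕ → Ω → ℝ := fun i ω => ∑ j : Fin t, ({ω' | p j ω' ≤ β i}.indicator (fun _ => (1:ℝ))) ω
    with hS
  have hSmeas : ∀ i, Measurable (S i) := by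
    intro i
    apply Finset.measurable_sum
    intro j _
    exact (measurable_const).indicator (msets j (β i))
  have hSint : ∀ i, Integrable (S i) μ := by
    intro i
    apply integrable_finset_sum
    intro j _
    exact (integrable_const 1).indicator (msets j (β i))
  have hScount : ∀ i ω, S i ω = ((Finset.univ.filter fun j => p j ω ≤ β i).card : ℝ) := by
    intro i ω
    rw [hS]
    simp only [Set.indicator_apply, Set.mem_setOf_eq]
    rw [Finset.sum_boole]
  have hSmono : ∀ i ω, 1 ≤ i → i ≤ m → S (i-1) ω ≤ S i ω := by
    intro i ω hi1 him
    apply Finset.sum_le_sum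
    intro j _
    simp only [Set.indicator_apply, Set.mem_setOf_eq]
    by_cases h : p j ω ≤ β (i-1)
    · rw [if_pos h, if_pos (h.trans (hβmono (i-1) i (by omega) him))]
    · rw [if_neg h]
      split_ifs <;> norm_num
  -- the counting event
  set F : Set Ω := ⋃ k ∈ Finset.Icc 1 m, {ω | (k:ℝ) ≤ S k ω} with hF
  have hFmeas : MeasurableSet F := by
    apply MeasurableSet.biUnion (Finset.countable_toSet _)
    intro k _
    exact measurableSet_le measurable_const (hSmeas k)
  have hEF : {ω | ∃ i ∈ Finset.Icc 1 m, orderStat (fun j => p j ω) i ≤ β i} ⊆ F := by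
    intro ω hω
    obtain ⟨i, hi, hle⟩ := hω
    simp only [Finset.mem_Icc] at hi
    refine Set.mem_biUnion (Finset.mem_Icc.2 ⟨hi.1, hi.2.trans ?_⟩) ?_
    · exact le_rfl
    show (i:ℝ) ≤ S i ω
    rw [hScount]
    exact_mod_cast orderStat_le_count2 (fun j => p j ω) hi.1 (hi.2.trans hm) hle
  -- the good event
  set G : Set Ω := {ω | ∀ j, 0 < p j ω} with hG
  have hGae : ∀ᵐ ω ∂μ, ω ∈ G := by
    rw [ae_iff]
    refine measure_mono_null ?_ (measure_iUnion_null key0)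
    intro ω hω
    simp only [hG, Set.mem_setOf_eq, not_forall, not_lt] at hω
    obtain ⟨j, hj⟩ := hω
    exact Set.mem_iUnion.2 ⟨j, hj⟩
  have hS0 : ∀ ω ∈ G, S 0 ω = 0 := by
    intro ω hω
    rw [hS]
    apply Finset.sum_eq_zero
    intro j _
    rw [Set.indicator_apply, if_neg]
    simp only [Set.mem_setOf_eq, hβ0, not_le]
    exact hω j
  -- pointwise bound
  set g : Ω → ℝ := fun ω => ∑ i ∈ Finset.Icc 1 m, (S i ω - S (i-1) ω)/(i:ℝ) with hg
  have hgnonneg : ∀ ω, 0 ≤ g ω := by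
    intro ω
    apply Finset.sum_nonneg
    intro i hi
    simp only [Finset.mem_Icc] at hi
    apply div_nonneg (by linarith [hSmono i ω hi.1 hi.2]) (by positivity)
  have hpt : ∀ ω ∈ G, F.indicator (fun _ => (1:ℝ)) ω ≤ g ω := by
    intro ω hωG
    rw [Set.indicator_apply]
    split_ifs with hωF
    · obtain ⟨k, hk, hkS⟩ := Set.mem_iUnion₂.1 hωF
      simp only [Finset.mem_Icc] at hk
      have hkS' : (k:ℝ) ≤ S k ω := hkS
      have hk0 : (0:ℝ) < (k:ℝ) := by exact_mod_cast hk.1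
      calc (1:ℝ) ≤ S k ω / k := by
            rw [le_div_iff₀ hk0]; linarith
        _ = (S k ω - S 0 ω) / k := by rw [hS0 ω hωG]; ring_nf
        _ = (∑ i ∈ Finset.Icc 1 k, (S i ω - S (i-1) ω)) / k := by rw [tele2 (fun i => S i ω) k]
        _ = ∑ i ∈ Finset.Icc 1 k, (S i ω - S (i-1) ω) / k := by rw [Finset.sum_div]
        _ ≤ ∑ i ∈ Finset.Icc 1 k, (S i ω - S (i-1) ω) / i := by
            apply Finset.sum_le_sum
            intro i hi
            simp only [Finset.mem_Icc] at hi
            apply div_le_div_of_nonneg_left (by linarith [hSmono i ω hi.1 (hi.2.trans hk.2)])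
              (by exact_mod_cast hi.1) (by exact_mod_cast hi.2)
        _ ≤ g ω := by
            apply Finset.sum_le_sum_of_subset_of_nonneg
            · apply Finset.Icc_subset_Icc_right hk.2
            · intro i hi _
              simp only [Finset.mem_Icc] at hi
              apply div_nonneg (by linarith [hSmono i ω hi.1 hi.2]) (by positivity)
    · exact hgnonneg ω
  -- integrals
  set a : ℕ → ℝ := fun i => ∫ ω, S i ω ∂μ with ha
  have haval : ∀ i, a i = ∑ j : Fin t, (μ {ω | p j ω ≤ β i}).toReal := by
    intro i
    simp only [ha, hS]
    rw [integral_finset_sum]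
    · apply Finset.sum_congr rfl
      intro j _
      rw [integral_indicator_const (1:ℝ) (msets j (β i))]
      simp [Measure.real]
    · intro j _
      exact (integrable_const 1).indicator (msets j (β i))
  have ha0 : a 0 = 0 := by
    rw [haval]
    apply Finset.sum_eq_zero
    intro j _
    rw [hβ0, key0 j]
    simp
  have hab : ∀ i, 1 ≤ i → i ≤ m → a i ≤ (t:ℝ) * β i := by
    intro i hi1 him
    rw [haval]
    calc ∑ j : Fin t, (μ {ω | p j ω ≤ β i}).toReal ≤ ∑ j : Fin t, β i := by
          apply Finset.sum_le_sum
          intro j _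
          exact keyC j (β i) (hβ0 ▸ hβmono 0 i (by omega) him)
            ((hβmono i m him le_rfl).trans hβ1)
      _ = (t:ℝ) * β i := by
          rw [Finset.sum_const, Finset.card_univ, Fintype.card_fin, nsmul_eq_mul]
  have hgint : Integrable g μ := by
    apply integrable_finset_sum
    intro i _
    exact ((hSint i).sub (hSint (i-1))).div_const _
  have hgval : ∫ ω, g ω ∂μ = ∑ i ∈ Finset.Icc 1 m, (a i - a (i-1))/(i:ℝ) := by
    rw [hg, integral_finset_sum]
    · apply Finset.sum_congr rfl
      intro i _
      rw [integral_div, integral_sub (hSint i) (hSint (i-1))]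
    · intro i _
      exact ((hSint i).sub (hSint (i-1))).div_const _
  -- conclusion
  calc (μ {ω | ∃ i ∈ Finset.Icc 1 m, orderStat (fun j => p j ω) i ≤ β i}).toReal
      ≤ (μ F).toReal := ENNReal.toReal_mono (measure_ne_top _ _) (measure_mono hEF)
    _ = ∫ ω, F.indicator (fun _ => (1:ℝ)) ω ∂μ := by
        rw [integral_indicator_const (1:ℝ) hFmeas]; simp [Measure.real]
    _ ≤ ∫ ω, g ω ∂μ := by
        apply integral_mono_ae ((integrable_const 1).indicator hFmeas) hgint
        filter_upwards [hGae] with ω hω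
        exact hpt ω hω
    _ = ∑ i ∈ Finset.Icc 1 m, (a i - a (i-1))/(i:ℝ) := hgval
    _ ≤ ∑ i ∈ Finset.Icc 1 m, ((t:ℝ) * β i - (t:ℝ) * β (i-1))/(i:ℝ) := by
        apply abel_le2 a (fun i => (t:ℝ) * β i) ha0 (by simp [hβ0]) m hab
    _ = t * ∑ i ∈ Finset.Icc 1 m, (β i - β (i - 1)) / i := by
        rw [Finset.mul_sum]
        apply Finset.sum_congr rfl
        intro i _
        ring
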